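/- Let f: ℝ^d → ℝ be differentiable with ∇f being q-growth Lipschitz for q ≥ 1 with constant L_q. Then for all x, y ∈ ℝ^d, f(y) ≤ f(x) + ∇f(x)·(y - x) + 2^(2q-2) L_q (1 + |x|^(q-1) + |y|^(q-1)) |x - y|². -/

import Mathlib

open Set

/-- if `∇f` is `q`-growth Lipschitz with constant `L` for `q ≥ 1`, then
`f y ≤ f x + ∇f(x)·(y-x) + 2^(2q-2) L (1 + ‖x‖^(q-1) + ‖y‖^(q-1)) ‖x-y‖²`. -/
theorem descent_lemma_growth_lipschitz
    (d : ℕ) (q L : ℝ) (hq : 1 ≤ q) (hL : 0 < L)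
    (f : EuclideanSpace ℝ (Fin d) → ℝ)
    (f' : EuclideanSpace ℝ (Fin d) → EuclideanSpace ℝ (Fin d))
    (hdiff : ∀ x, HasGradientAt f (f' x) x)
    (hgl : ∀ x y : EuclideanSpace ℝ (Fin d),
      ‖f' x - f' y‖ ≤ L * min ‖x - y‖ 1 * (1 + ‖x‖ ^ (q - 1) + ‖y‖ ^ (q - 1))) :
    ∀ x y : EuclideanSpace ℝ (Fin d),
      f y ≤ f x + (inner ℝ (f' x) (y - x) : ℝ)
        + (2 : ℝ) ^ (2 * q - 2) * L * (1 + ‖x‖ ^ (q - 1) + ‖y‖ ^ (q - 1)) * ‖x - y‖ ^ 2 := by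
  intro x y
  have hqnn : (0 : ℝ) ≤ q - 1 := by linarith
  set M : ℝ := 1 + ‖x‖ ^ (q - 1) + ‖y‖ ^ (q - 1) with hM
  have hxp : (0:ℝ) ≤ ‖x‖ ^ (q - 1) := Real.rpow_nonneg (norm_nonneg _) _
  have hyp : (0:ℝ) ≤ ‖y‖ ^ (q - 1) := Real.rpow_nonneg (norm_nonneg _) _
  have hMpos : 0 < M := by simp only [hM]; linarith
  set c : ℝ := (inner ℝ (f' x) (y - x) : ℝ) with hc
  set K : ℝ := L * M * ‖y - x‖ ^ 2 with hK
  -- derivative of the path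
  have hγ : ∀ t : ℝ, HasDerivAt (fun t : ℝ => x + t • (y - x)) (y - x) t := by
    intro t
    simpa using (((hasDerivAt_id t).smul_const (y - x)).const_add x)
  -- derivative of f along the path
  have hg : ∀ t : ℝ, HasDerivAt (fun t : ℝ => f (x + t • (y - x)))
      ((inner ℝ (f' (x + t • (y - x))) (y - x) : ℝ)) t := by
    intro t
    have h1 := ((hdiff (x + t • (y - x))).hasFDerivAt).comp_hasDerivAt t (hγ t)
    simp only [InnerProductSpace.toDual_apply_apply] at h1
    exact h1
  -- derivative of the auxiliary function
  have hh : ∀ t : ℝ, HasDerivAt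
      (fun t : ℝ => f (x + t • (y - x)) - t * c - K * t ^ 2)
      ((inner ℝ (f' (x + t • (y - x))) (y - x) : ℝ) - c - K * (2 * t)) t := by
    intro t
    have h2 : HasDerivAt (fun t : ℝ => t * c) c t := hasDerivAt_mul_const c
    have h3 : HasDerivAt (fun t : ℝ => K * t ^ 2) (K * (2 * t)) t := by
      have := (hasDerivAt_pow 2 t).const_mul K
      simpa using this
    exact ((hg t).sub h2).sub h3
  -- the auxiliary function is antitone on [0,1]
  have hanti : AntitoneOn (fun t : ℝ => f (x + t • (y - x)) - t * c - K * t ^ 2)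
      (Icc (0:ℝ) 1) := by
    apply antitoneOn_of_deriv_nonpos (convex_Icc 0 1)
    · exact (fun t _ => (hh t).differentiableAt.continuousAt.continuousWithinAt)
    · intro t _
      exact (hh t).differentiableAt.differentiableWithinAt
    · intro t ht
      rw [interior_Icc] at ht
      rw [(hh t).deriv]
      -- bound the derivative
      set z := x + t • (y - x) with hz
      have hzx : ‖z - x‖ = t * ‖y - x‖ := by
        rw [hz]
        simp [norm_smul, abs_of_nonneg ht.1.le]
      have hzn : ‖z‖ ^ (q-1) ≤ ‖x‖ ^ (q-1) + ‖y‖ ^ (q-1) := by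
        have h1 : ‖z‖ ≤ max ‖x‖ ‖y‖ := by
          have : z = (1 - t) • x + t • y := by
            rw [hz]; module
          rw [this]
          calc ‖(1 - t) • x + t • y‖ ≤ ‖(1 - t) • x‖ + ‖t • y‖ := norm_add_le _ _
            _ = (1 - t) * ‖x‖ + t * ‖y‖ := by
                rw [norm_smul, norm_smul, Real.norm_eq_abs, Real.norm_eq_abs,
                  abs_of_nonneg (by linarith [ht.2] : (0:ℝ) ≤ 1 - t),
                  abs_of_nonneg ht.1.le]
            _ ≤ (1 - t) * max ‖x‖ ‖y‖ + t * max ‖x‖ ‖y‖ := by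
                gcongr
                · linarith [ht.2]
                · exact le_max_left _ _
                · exact ht.1.le
                · exact le_max_right _ _
            _ = max ‖x‖ ‖y‖ := by ring
        calc ‖z‖ ^ (q-1) ≤ (max ‖x‖ ‖y‖) ^ (q-1) :=
              Real.rpow_le_rpow (norm_nonneg _) h1 hqnn
          _ ≤ ‖x‖ ^ (q-1) + ‖y‖ ^ (q-1) := by
              rcases max_cases ‖x‖ ‖y‖ with ⟨h, _⟩ | ⟨h, _⟩ <;> rw [h] <;> linarith
      have hbound : ‖f' z - f' x‖ ≤ L * (t * ‖y - x‖) * (2 * M) := by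
        calc ‖f' z - f' x‖ ≤ L * min ‖z - x‖ 1 * (1 + ‖z‖ ^ (q-1) + ‖x‖ ^ (q-1)) :=
              hgl z x
          _ ≤ L * (t * ‖y - x‖) * (2 * M) := by
              apply mul_le_mul
              · apply mul_le_mul_of_nonneg_left _ hL.le
                rw [← hzx]; exact min_le_left _ _
              · simp only [hM]; linarith
              · positivity
              · have h0 : (0:ℝ) ≤ t := ht.1.le
                positivity
      have hinner : (inner ℝ (f' z) (y - x) : ℝ) - c ≤ 2 * K * t := by
        have h1 : (inner ℝ (f' z) (y - x) : ℝ) - c = (inner ℝ (f' z - f' x) (y - x) : ℝ) := by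
          rw [hc, inner_sub_left]
        rw [h1]
        calc (inner ℝ (f' z - f' x) (y - x) : ℝ) ≤ ‖f' z - f' x‖ * ‖y - x‖ :=
              real_inner_le_norm _ _
          _ ≤ L * (t * ‖y - x‖) * (2 * M) * ‖y - x‖ := by
              apply mul_le_mul_of_nonneg_right hbound (norm_nonneg _)
          _ = 2 * K * t := by rw [hK]; ring
      linarith
  -- conclude h(1) ≤ h(0)
  have key := hanti (by norm_num : (0:ℝ) ∈ Icc (0:ℝ) 1)
    (by norm_num : (1:ℝ) ∈ Icc (0:ℝ) 1) (by norm_num)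
  simp only [zero_smul, add_zero, one_smul, zero_mul, mul_zero, sub_zero,
    zero_pow, one_pow, mul_one, one_mul] at key
  have hxy : x + (y - x) = y := by abel
  rw [hxy] at key
  -- f y ≤ f x + c + K
  have hfy : f y ≤ f x + c + K := by linarith
  -- compare K to the stated constant
  have hpow : (1:ℝ) ≤ (2:ℝ) ^ (2 * q - 2) :=
    Real.one_le_rpow one_le_two (by linarith)
  have hnorm : ‖y - x‖ = ‖x - y‖ := norm_sub_rev _ _
  have hKle : K ≤ (2:ℝ) ^ (2 * q - 2) * L * M * ‖x - y‖ ^ 2 := by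
    rw [hK, hnorm]
    have h2 : 0 ≤ L * M * ‖x - y‖ ^ 2 := by positivity
    nlinarith
  calc f y ≤ f x + c + K := hfy
    _ ≤ f x + c + (2:ℝ) ^ (2 * q - 2) * L * M * ‖x - y‖ ^ 2 := by linarith
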